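/- Let a, b be positive contractions in M_n(ℂ) with eigenvalues α_1 ≤ … ≤ α_n and β_1 ≤ … ≤ β_n in ascending order. Then for r > 0, the condition 'for all t > 0, rank((a − t − r)_+) ≤ rank((b − t)_+) and rank((b − t − r)_+) ≤ rank((a − t)_+)' holds if and only if max_i |α_i − β_i| ≤ r. -/

import Mathlib

open scoped Matrix.Norms.L2Operator ComplexOrder

/-- The positive part `(a - s)₊` of a Hermitian matrix `a`, computed via its spectral
decomposition. -/
noncomputable def cutM {n : ℕ} (s : ℝ) {a : Matrix (Fin n) (Fin n) ℂ}
    (ha : a.IsHermitian) : Matrix (Fin n) (Fin n) ℂ :=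
  (ha.eigenvectorUnitary : Matrix (Fin n) (Fin n) ℂ) *
    Matrix.diagonal (fun i => ((max (ha.eigenvalues i - s) 0 : ℝ) : ℂ)) *
    star (ha.eigenvectorUnitary : Matrix (Fin n) (Fin n) ℂ)

lemma rank_cutM {n : ℕ} (s : ℝ) {a : Matrix (Fin n) (Fin n) ℂ} (ha : a.IsHermitian) :
    (cutM s ha).rank = (Finset.univ.filter (fun i => s < ha.eigenvalues i)).card := by
  rw [cutM, ← Unitary.coe_star,
    Matrix.rank_mul_eq_left_of_isUnit_det _ _
      (Matrix.UnitaryGroup.det_isUnit (star ha.eigenvectorUnitary)),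
    Matrix.rank_mul_eq_right_of_isUnit_det _ _
      (Matrix.UnitaryGroup.det_isUnit ha.eigenvectorUnitary),
    Matrix.rank_diagonal, Fintype.card_subtype]
  congr 1
  ext i
  simp only [Finset.mem_filter, Finset.mem_univ, true_and, ne_eq, Complex.ofReal_eq_zero,
    sup_eq_right, not_le, sub_pos]

lemma card_filter_perm {n : ℕ} (s : ℝ) (α γ : Fin n → ℝ) (σ : Equiv.Perm (Fin n))
    (h : ∀ i, α i = γ (σ i)) :
    (Finset.univ.filter (fun i => s < γ i)).card
      = (Finset.univ.filter (fun i => s < α i)).card := by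
  apply Finset.card_bij (fun i _ => σ.symm i)
  · intro i hi
    simp only [Finset.mem_filter, Finset.mem_univ, true_and] at hi ⊢
    rw [h, Equiv.apply_symm_apply]; exact hi
  · intro i _ j _ hij
    exact σ.symm.injective hij
  · intro j hj
    refine ⟨σ j, ?_, by simp⟩
    simp only [Finset.mem_filter, Finset.mem_univ, true_and] at hj ⊢
    rwa [← h]

/-- Key counting lemma: if the shifted rank comparison holds in one direction, then
`α i - β i ≤ r` for each `i`. -/
lemma key_count {n : ℕ} (α β : Fin n → ℝ) (hαmono : Monotone α) (hβmono : Monotone β)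
    (hβ0 : ∀ i, 0 ≤ β i) (r : ℝ) (hr : 0 < r)
    (H : ∀ t : ℝ, 0 < t →
      (Finset.univ.filter (fun j => t + r < α j)).card
        ≤ (Finset.univ.filter (fun j => t < β j)).card)
    (i : Fin n) : α i - β i ≤ r := by
  by_contra hcon
  push_neg at hcon
  set t : ℝ := (β i + (α i - r)) / 2 with ht
  have hβt : β i < t := by rw [ht]; linarith
  have htα : t + r < α i := by rw [ht]; linarith
  have ht0 : 0 < t := lt_of_le_of_lt (hβ0 i) hβt
  have h1 : Finset.Ici i ⊆ Finset.univ.filter (fun j => t + r < α j) := by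
    intro j hj
    simp only [Finset.mem_Ici] at hj
    simp only [Finset.mem_filter, Finset.mem_univ, true_and]
    exact lt_of_lt_of_le htα (hαmono hj)
  have h2 : Finset.univ.filter (fun j => t < β j) ⊆ Finset.Ioi i := by
    intro j hj
    simp only [Finset.mem_filter, Finset.mem_univ, true_and] at hj
    simp only [Finset.mem_Ioi]
    by_contra hji
    push_neg at hji
    exact absurd (lt_of_lt_of_le hj (hβmono hji)) (not_lt.mpr hβt.le)
  have c1 := Finset.card_le_card h1
  have c2 := Finset.card_le_card h2
  rw [Fin.card_Ici] at c1
  rw [Fin.card_Ioi] at c2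
  have := H t ht0
  have hi := i.isLt
  omega

/-- For positive contractions in `Mₙ(ℂ)` with eigenvalues listed in ascending order,
the rank comparison condition defining `d_W(a,b) ≤ r` holds if and only if
`max_i |α_i - β_i| ≤ r`. -/
theorem rank_comparison_iff_ordered_matching {n : ℕ} (a b : Matrix (Fin n) (Fin n) ℂ)
    (ha : a.PosSemidef) (hb : b.PosSemidef) (ha1 : ‖a‖ ≤ 1) (hb1 : ‖b‖ ≤ 1)
    (α β : Fin n → ℝ) (hαmono : Monotone α) (hβmono : Monotone β)
    (hα : ∃ σ : Equiv.Perm (Fin n), ∀ i, α i = ha.isHermitian.eigenvalues (σ i))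
    (hβ : ∃ σ : Equiv.Perm (Fin n), ∀ i, β i = hb.isHermitian.eigenvalues (σ i))
    (r : ℝ) (hr : 0 < r) :
    (∀ t : ℝ, 0 < t → (cutM (t + r) ha.isHermitian).rank ≤ (cutM t hb.isHermitian).rank ∧
        (cutM (t + r) hb.isHermitian).rank ≤ (cutM t ha.isHermitian).rank) ↔
      (⨆ i, |α i - β i|) ≤ r := by
  obtain ⟨σa, hσa⟩ := hα
  obtain ⟨σb, hσb⟩ := hβ
  have hra : ∀ s, (cutM s ha.isHermitian).rank
      = (Finset.univ.filter (fun i => s < α i)).card := fun s => by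
    rw [rank_cutM, card_filter_perm s α _ σa hσa]
  have hrb : ∀ s, (cutM s hb.isHermitian).rank
      = (Finset.univ.filter (fun i => s < β i)).card := fun s => by
    rw [rank_cutM, card_filter_perm s β _ σb hσb]
  have hα0 : ∀ i, 0 ≤ α i := fun i => (hσa i) ▸ ha.eigenvalues_nonneg (σa i)
  have hβ0 : ∀ i, 0 ≤ β i := fun i => (hσb i) ▸ hb.eigenvalues_nonneg (σb i)
  constructor
  · intro H
    apply Real.iSup_le _ hr.le
    intro i
    rw [abs_sub_le_iff]
    constructor
    · exact key_count α β hαmono hβmono hβ0 r hr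
        (fun t ht => by rw [← hra, ← hrb]; exact (H t ht).1) i
    · exact key_count β α hβmono hαmono hα0 r hr
        (fun t ht => by rw [← hra, ← hrb]; exact (H t ht).2) i
  · intro H t ht
    have habs : ∀ i, |α i - β i| ≤ r := fun i =>
      le_trans (le_ciSup (f := fun i => |α i - β i|) (Set.Finite.bddAbove (Set.finite_range _)) i) H
    constructor
    · rw [hra, hrb]
      apply Finset.card_le_card
      intro j hj
      simp only [Finset.mem_filter, Finset.mem_univ, true_and] at hj ⊢
      have := (abs_sub_le_iff.mp (habs j)).1
      linarith
    · rw [hra, hrb]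
      apply Finset.card_le_card
      intro j hj
      simp only [Finset.mem_filter, Finset.mem_univ, true_and] at hj ⊢
      have := (abs_sub_le_iff.mp (habs j)).2
      linarith
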